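/- For any τ > 0 and ε > 0, as ρ → 0⁺ one has ∫_{B_{√8 ε/(τρ)}(0)} (1 + |x|²/8)^{-2} · ( −4 log ρ − log(τ²/8) − 2 log(1 + |x|²/8) )² dx = 128π (log ρ)² · (1 + o(1)). -/

import Mathlib

open MeasureTheory Real Filter Topology

lemma gcont_aux (a : ℝ) :
    ContinuousOn (fun s : ℝ => ((1 + s/8)^2)⁻¹ * (a - 2*Real.log (1 + s/8))^2)
      (Set.Ici (0:ℝ)) := by
  have h8 : ∀ s ∈ Set.Ici (0:ℝ), (1 + s/8 : ℝ) ≠ 0 := by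
    intro s hs
    have : (0:ℝ) < 1 + s/8 := by
      have : (0:ℝ) ≤ s := hs
      linarith
    exact this.ne'
  have hc : ContinuousOn (fun s : ℝ => 1 + s/8) (Set.Ici (0:ℝ)) := by fun_prop
  have hlog : ContinuousOn (fun s : ℝ => Real.log (1 + s/8)) (Set.Ici (0:ℝ)) :=
    hc.log h8
  have hinv : ContinuousOn (fun s : ℝ => ((1 + s/8)^2)⁻¹) (Set.Ici (0:ℝ)) := by
    apply (hc.pow 2).inv₀
    intro s hs
    exact pow_ne_zero _ (h8 s hs)
  exact hinv.mul ((continuousOn_const.sub (continuousOn_const.mul hlog)).pow 2)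

lemma radial_integral (g : ℝ → ℝ) (R : ℝ) (hR : 0 < R)
    (hg : ContinuousOn g (Set.Icc 0 (R^2))) :
    ∫ x in {x : ℝ × ℝ | x.1^2 + x.2^2 < R^2}, g (x.1^2 + x.2^2)
      = π * ∫ s in (0:ℝ)..(R^2), g s := by
  have hSopen : IsOpen {x : ℝ × ℝ | x.1^2 + x.2^2 < R^2} := by
    apply isOpen_lt (by fun_prop) continuous_const
  set F : ℝ → ℝ := Set.indicator (Set.Ioo 0 R) (fun r => r * g (r^2)) with hF
  have step1 : ∫ x in {x : ℝ × ℝ | x.1^2 + x.2^2 < R^2}, g (x.1^2 + x.2^2)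
      = ∫ x : ℝ × ℝ, Set.indicator {x : ℝ × ℝ | x.1^2 + x.2^2 < R^2}
          (fun x => g (x.1^2 + x.2^2)) x := by
    rw [integral_indicator hSopen.measurableSet]
  rw [step1, ← integral_comp_polarCoord_symm]
  have hcongr : Set.EqOn
      (fun p : ℝ × ℝ => p.1 • (Set.indicator {x : ℝ × ℝ | x.1^2 + x.2^2 < R^2}
          (fun x => g (x.1^2 + x.2^2)) (polarCoord.symm p)))
      (fun p : ℝ × ℝ => F p.1 * 1) polarCoord.target := by
    rintro ⟨r, θ⟩ hp
    have hr : 0 < r := hp.1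
    have hsq : (polarCoord.symm (r, θ)).1 ^ 2 + (polarCoord.symm (r, θ)).2 ^ 2 = r^2 := by
      show (r * Real.cos θ)^2 + (r * Real.sin θ)^2 = r^2
      have := Real.sin_sq_add_cos_sq θ
      nlinarith [this]
    have hiff : (polarCoord.symm (r, θ)) ∈ {x : ℝ × ℝ | x.1^2 + x.2^2 < R^2} ↔ r < R := by
      simp only [Set.mem_setOf_eq, hsq]
      exact pow_lt_pow_iff_left₀ hr.le hR.le two_ne_zero
    by_cases h : r < R
    · have hmem : (polarCoord.symm (r, θ)) ∈ {x : ℝ × ℝ | x.1^2 + x.2^2 < R^2} := hiff.2 h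
      simp only [Set.indicator_of_mem hmem, hF, Set.indicator_of_mem (Set.mem_Ioo.2 ⟨hr, h⟩),
        smul_eq_mul, mul_one, hsq]
    · have hmem : (polarCoord.symm (r, θ)) ∉ {x : ℝ × ℝ | x.1^2 + x.2^2 < R^2} := fun hm =>
        h (hiff.1 hm)
      have hmem2 : r ∉ Set.Ioo (0:ℝ) R := fun hm => h hm.2
      simp only [Set.indicator_of_notMem hmem, Set.indicator_of_notMem hmem2, hF,
        smul_eq_mul, mul_zero, mul_one]
  rw [setIntegral_congr_fun (polarCoord.open_target.measurableSet) hcongr]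
  have htarget : polarCoord.target = Set.Ioi (0:ℝ) ×ˢ Set.Ioo (-π) π := rfl
  rw [htarget, Measure.volume_eq_prod]
  have hprod : ∫ p in Set.Ioi (0:ℝ) ×ˢ Set.Ioo (-π) π, F p.1 * 1 ∂(volume.prod volume)
      = (∫ r in Set.Ioi (0:ℝ), F r) * ∫ _ in Set.Ioo (-π) π, (1:ℝ) :=
    setIntegral_prod_mul F (fun _ => (1:ℝ)) _ _
  rw [hprod]
  have hθ : ∫ _ in Set.Ioo (-π) π, (1:ℝ) = 2*π := by
    simp only [integral_const, smul_eq_mul, mul_one, Measure.real, Measure.restrict_apply_univ, Real.volume_Ioo]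
    rw [ENNReal.toReal_ofReal (by linarith [Real.pi_pos])]
    ring
  have hrad : ∫ r in Set.Ioi (0:ℝ), F r = (∫ s in (0:ℝ)..(R^2), g s) / 2 := by
    rw [hF, setIntegral_indicator measurableSet_Ioo,
      Set.inter_eq_self_of_subset_right Set.Ioo_subset_Ioi_self,
      ← integral_Ioc_eq_integral_Ioo, ← intervalIntegral.integral_of_le hR.le]
    have hsub : ∫ r in (0:ℝ)..R, (2*r) • g (r^2) = ∫ s in (0:ℝ)..(R^2), g s := by
      have h := intervalIntegral.integral_comp_smul_deriv' (a := (0:ℝ)) (b := R)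
        (f := fun r => r^2) (f' := fun r => 2*r) (g := g)
        (fun x _ => by simpa using hasDerivAt_pow 2 x)
        (by fun_prop)
        (by
          apply hg.mono
          rintro y ⟨x, hx, rfl⟩
          rw [Set.uIcc_of_le hR.le] at hx
          have h1 : (0:ℝ) ≤ x := hx.1
          have h2 : x ≤ R := hx.2
          simp only [Set.mem_Icc]
          constructor
          · positivity
          · nlinarith [hR.le])
      simpa using h
    have h2 : ∫ r in (0:ℝ)..R, (2*r) • g (r^2) = 2 * ∫ r in (0:ℝ)..R, r * g (r^2) := by
      rw [← intervalIntegral.integral_const_mul]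
      congr 1
      ext r
      simp [smul_eq_mul]
      ring
    rw [h2] at hsub
    linarith
  rw [hrad, hθ]
  ring

lemma ftc_aux (a S : ℝ) (hS : 0 ≤ S) :
    ∫ s in (0:ℝ)..S, ((1 + s/8)^2)⁻¹ * (a - 2*Real.log (1 + s/8))^2
      = 8*((a^2 - 4*a + 8)
        - (1 + S/8)⁻¹*((a - 2*Real.log (1 + S/8))^2 + 8*Real.log (1 + S/8) + 8 - 4*a)) := by
  set Φ : ℝ → ℝ := fun s =>
    -8 * ((a - 2*Real.log (1 + s/8))^2 + 8*Real.log (1 + s/8) + 8 - 4*a) / (1 + s/8) with hΦ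
  have huIcc : Set.uIcc (0:ℝ) S = Set.Icc 0 S := Set.uIcc_of_le hS
  have hderiv : ∀ s ∈ Set.uIcc (0:ℝ) S,
      HasDerivAt Φ (((1 + s/8)^2)⁻¹ * (a - 2*Real.log (1 + s/8))^2) s := by
    intro s hs
    rw [huIcc] at hs
    have hu : (0:ℝ) < 1 + s/8 := by linarith [hs.1]
    have h1 : HasDerivAt (fun s : ℝ => 1 + s/8) (1/8) s := by
      simpa using ((hasDerivAt_id s).div_const 8).const_add 1
    have hlog : HasDerivAt (fun s : ℝ => Real.log (1 + s/8)) (1/8 / (1 + s/8)) s :=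
      h1.log hu.ne'
    have hA : HasDerivAt (fun s : ℝ => a - 2*Real.log (1 + s/8))
        (-(2 * (1/8 / (1 + s/8)))) s := (hlog.const_mul 2).const_sub a
    have hA2 : HasDerivAt (fun s : ℝ => (a - 2*Real.log (1 + s/8))^2)
        (2 * (a - 2*Real.log (1 + s/8))^1 * (-(2 * (1/8 / (1 + s/8))))) s := hA.pow 2
    have hnum : HasDerivAt (fun s : ℝ =>
        -8 * ((a - 2*Real.log (1 + s/8))^2 + 8*Real.log (1 + s/8) + 8 - 4*a))
        (-8 * ((2 * (a - 2*Real.log (1 + s/8))^1 * (-(2 * (1/8 / (1 + s/8)))))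
          + 8 * (1/8 / (1 + s/8)))) s := by
      exact (((hA2.add (hlog.const_mul 8)).add_const 8).sub_const (4*a)).const_mul (-8)
    have h := hnum.div h1 hu.ne'
    refine HasDerivAt.congr_deriv h ?_
    set u : ℝ := 1 + s/8 with hu'
    set l : ℝ := Real.log u with hl'
    have hune : u ≠ 0 := hu.ne'
    field_simp
    ring
  have hint : IntervalIntegrable
      (fun s : ℝ => ((1 + s/8)^2)⁻¹ * (a - 2*Real.log (1 + s/8))^2) volume 0 S := by
    apply ContinuousOn.intervalIntegrable
    apply (gcont_aux a).mono
    rw [huIcc]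
    intro x hx
    exact hx.1
  rw [intervalIntegral.integral_eq_sub_of_hasDerivAt hderiv hint]
  have h0 : Φ 0 = -8 * ((a - 2*Real.log 1)^2 + 8*Real.log 1 + 8 - 4*a) := by
    simp [hΦ]
  have hune : (1 + S/8 : ℝ) ≠ 0 := by positivity
  rw [hΦ]
  simp only [zero_div, add_zero, Real.log_one]
  field_simp
  ring

lemma key_integral (a R : ℝ) (hR : 0 < R) :
    ∫ x in {x : ℝ × ℝ | x.1^2 + x.2^2 < R^2},
        ((1 + (x.1^2 + x.2^2)/8)^2)⁻¹ * (a - 2*Real.log (1 + (x.1^2 + x.2^2)/8))^2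
      = 8*π*((a^2 - 4*a + 8)
        - (1 + R^2/8)⁻¹*((a - 2*Real.log (1 + R^2/8))^2 + 8*Real.log (1 + R^2/8) + 8 - 4*a)) := by
  rw [radial_integral (fun s => ((1 + s/8)^2)⁻¹ * (a - 2*Real.log (1 + s/8))^2) R hR
      ((gcont_aux a).mono (fun x hx => hx.1)),
    ftc_aux a (R^2) (sq_nonneg R)]
  ring

theorem stmt17 (τ ε : ℝ) (hτ : 0 < τ) (hε : 0 < ε) :
    Tendsto (fun ρ : ℝ =>
      (∫ x in {x : ℝ × ℝ | x.1^2 + x.2^2 < (Real.sqrt 8 * ε / (τ * ρ))^2},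
        ((1 + (x.1^2 + x.2^2) / 8)^2)⁻¹ *
          (-4 * Real.log ρ - Real.log (τ^2 / 8) -
            2 * Real.log (1 + (x.1^2 + x.2^2) / 8))^2) /
        (128 * π * (Real.log ρ)^2))
      (𝓝[>] 0) (𝓝 1) := by
  set c : ℝ := Real.log (τ^2/8) with hc
  set lt : ℝ := Real.log τ with hlt
  set G : ℝ → ℝ := fun ρ =>
    ((-4 - c * (Real.log ρ)⁻¹)^2 - 4*(-4 - c*(Real.log ρ)⁻¹)*(Real.log ρ)⁻¹
        + 8*((Real.log ρ)⁻¹)^2)/16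
      - (((-c + 4*lt - 2*Real.log (τ^2*ρ^2 + ε^2))^2 + 8*Real.log (τ^2*ρ^2 + ε^2)
            - 16*lt + 8 + 4*c)
          * (1 + ε^2/(τ^2*ρ^2))⁻¹ * ((Real.log ρ)⁻¹)^2) / 16 with hG
  have hGlim : Tendsto G (𝓝[>] (0:ℝ)) (𝓝 1) := by
    have hinv : Tendsto (fun ρ : ℝ => (Real.log ρ)⁻¹) (𝓝[>] (0:ℝ)) (𝓝 0) := by
      have h1 : Tendsto (fun ρ : ℝ => -Real.log ρ) (𝓝[>] (0:ℝ)) atTop :=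
        tendsto_neg_atBot_atTop.comp Real.tendsto_log_nhdsGT_zero
      have h2 := (tendsto_inv_atTop_zero.comp h1).neg
      simp only [neg_zero] at h2
      refine h2.congr fun ρ => ?_
      simp [Function.comp, inv_neg]
    have hP : Tendsto (fun ρ : ℝ => Real.log (τ^2*ρ^2 + ε^2)) (𝓝[>] (0:ℝ))
        (𝓝 (Real.log (ε^2))) := by
      have hca : ContinuousAt (fun ρ : ℝ => Real.log (τ^2*ρ^2 + ε^2)) 0 := by
        apply (Real.continuousAt_log (by positivity)).comp
        fun_prop
      have := hca.tendsto.mono_left (nhdsWithin_le_nhds (s := Set.Ioi (0:ℝ)))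
      simpa using this
    have hU : Tendsto (fun ρ : ℝ => (1 + ε^2/(τ^2*ρ^2))⁻¹) (𝓝[>] (0:ℝ)) (𝓝 0) := by
      have h1 : Tendsto (fun ρ : ℝ => τ^2*ρ^2) (𝓝[>] (0:ℝ)) (𝓝[>] (0:ℝ)) := by
        rw [tendsto_nhdsWithin_iff]
        constructor
        · have hcont2 : Continuous (fun ρ : ℝ => τ^2*ρ^2) := by continuity
          have := (hcont2.tendsto 0).mono_left (nhdsWithin_le_nhds (s := Set.Ioi (0:ℝ)))
          simpa using this
        · filter_upwards [self_mem_nhdsWithin] with ρ hρ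
          have hρ0 : (0:ℝ) < ρ := hρ
          exact Set.mem_Ioi.2 (by positivity)
      have h2 : Tendsto (fun ρ : ℝ => (τ^2*ρ^2)⁻¹) (𝓝[>] (0:ℝ)) atTop :=
        tendsto_inv_nhdsGT_zero.comp h1
      have h3 : Tendsto (fun ρ : ℝ => ε^2 * (τ^2*ρ^2)⁻¹) (𝓝[>] (0:ℝ)) atTop :=
        h2.const_mul_atTop (by positivity)
      have h4 : Tendsto (fun ρ : ℝ => 1 + ε^2/(τ^2*ρ^2)) (𝓝[>] (0:ℝ)) atTop := by
        apply tendsto_atTop_add_const_left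
        simpa [div_eq_mul_inv] using h3
      exact h4.inv_tendsto_atTop
    set F : ℝ × ℝ × ℝ → ℝ := fun q =>
      ((-4 - c*q.1)^2 - 4*(-4 - c*q.1)*q.1 + 8*q.1^2)/16
        - (((-c + 4*lt - 2*q.2.1)^2 + 8*q.2.1 - 16*lt + 8 + 4*c) * q.2.2 * q.1^2)/16
      with hFdef
    have hFcont : Continuous F := by fun_prop
    have hcomp : Tendsto (fun ρ : ℝ =>
        ((Real.log ρ)⁻¹, (Real.log (τ^2*ρ^2 + ε^2), (1 + ε^2/(τ^2*ρ^2))⁻¹)))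
        (𝓝[>] (0:ℝ)) (𝓝 ((0:ℝ), (Real.log (ε^2), (0:ℝ)))) :=
      hinv.prodMk_nhds (hP.prodMk_nhds hU)
    have h := (hFcont.tendsto _).comp hcomp
    have hFval : F ((0:ℝ), (Real.log (ε^2), (0:ℝ))) = 1 := by
      simp only [hFdef]
      norm_num
    rw [hFval] at h
    convert h using 1
    rfl
  apply hGlim.congr'
  filter_upwards [Ioo_mem_nhdsGT (one_pos : (0:ℝ) < 1)] with ρ hρ
  obtain ⟨hρ0, hρ1⟩ := hρ
  have hL : Real.log ρ < 0 := Real.log_neg hρ0 hρ1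
  have hL0 : Real.log ρ ≠ 0 := hL.ne
  have hRpos : 0 < Real.sqrt 8 * ε / (τ * ρ) := by
    have : (0:ℝ) < Real.sqrt 8 := Real.sqrt_pos.2 (by norm_num)
    positivity
  have hkey := key_integral (-4 * Real.log ρ - Real.log (τ^2/8)) _ hRpos
  have hR2 : (Real.sqrt 8 * ε / (τ * ρ))^2 / 8 = ε^2/(τ^2*ρ^2) := by
    rw [div_pow, mul_pow, mul_pow, Real.sq_sqrt (by norm_num : (0:ℝ) ≤ 8)]
    field_simp
  have hlogU : Real.log (1 + ε^2/(τ^2*ρ^2))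
      = Real.log (τ^2*ρ^2 + ε^2) - 2*lt - 2*Real.log ρ := by
    have h1 : 1 + ε^2/(τ^2*ρ^2) = (τ^2*ρ^2 + ε^2)/(τ^2*ρ^2) := by
      field_simp
    rw [h1, Real.log_div (by positivity) (by positivity),
      Real.log_mul (by positivity) (by positivity), Real.log_pow, Real.log_pow, hlt]
    push_cast
    ring
  rw [hkey, hR2, hlogU, ← hc]
  simp only [hG]
  have hπ : (π : ℝ) ≠ 0 := Real.pi_ne_zero
  have hq0 : (0:ℝ) < ε^2/(τ^2*ρ^2) := by positivity
  generalize hq : ε^2/(τ^2*ρ^2) = q at hq0 ⊢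
  generalize hPP : Real.log (τ^2*ρ^2 + ε^2) = P
  have h1q : (1 + q : ℝ) ≠ 0 := by positivity
  field_simp
  ring
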